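/- Let H be a bounded self-adjoint operator on a Hilbert space M with σ(H) ⊆ (0,1], and let T be the operator on M ⊕ M given in block form by T = [[I, −√(H⁻¹ − I)],[0, 0]]. Then T is idempotent and T attains its norm if and only if min σ(H) is an eigenvalue of H. -/

import Mathlib

set_option maxHeartbeats 1000000

open ContinuousLinearMap

private lemma le_of_sq_le_sq' (a b : ℝ) (ha : 0 ≤ a) (hb : 0 ≤ b) (h : a^2 ≤ b^2) : a ≤ b := by
  nlinarith

private lemma eq_of_sq_eq_sq'' (a b : ℝ) (ha : 0 ≤ a) (hb : 0 ≤ b) (h : a^2 = b^2) : a = b := by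
  nlinarith

private theorem aux_iff
    {M : Type*} [NormedAddCommGroup M] [InnerProductSpace ℂ M] [CompleteSpace M]
    [Nontrivial M]
    (H : M →L[ℂ] M) (hH : IsSelfAdjoint H)
    (hσ : spectrum ℂ H ⊆ (fun r : ℝ => (r : ℂ)) '' Set.Ioc 0 1)
    (Hinv : M →L[ℂ] M) (hHinv : H * Hinv = 1 ∧ Hinv * H = 1)
    (S : M →L[ℂ] M) (hS : S.IsPositive) (hS2 : S * S = Hinv - 1)
    (T : WithLp 2 (M × M) →L[ℂ] WithLp 2 (M × M))
    (hT : ∀ z : WithLp 2 (M × M),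
      T z = (WithLp.equiv 2 (M × M)).symm
        ((WithLp.equiv 2 (M × M) z).1 - S ((WithLp.equiv 2 (M × M) z).2), 0)) :
    ((∃ x : WithLp 2 (M × M), ‖x‖ = 1 ∧ ‖T x‖ = ‖T‖) ↔
        (∃ v : M, v ≠ 0 ∧
          H v = ((sInf {r : ℝ | (r : ℂ) ∈ spectrum ℂ H} : ℝ) : ℂ) • v)) := by
  set Sp : Set ℝ := {r : ℝ | (r : ℂ) ∈ spectrum ℂ H} with hSpdef
  set m : ℝ := sInf Sp with hm
  -- spectral facts
  have hsub : Sp ⊆ Set.Ioc 0 1 := fun r hr => by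
    obtain ⟨s, hs, hsr⟩ := hσ hr
    rwa [Complex.ofReal_inj.mp hsr] at hs
  have hbdd : BddBelow Sp := ⟨0, fun r hr => (hsub hr).1.le⟩
  have hAnontriv : Nontrivial (M →L[ℂ] M) := by
    obtain ⟨x, hx⟩ := exists_ne (0 : M)
    refine ⟨1, 0, fun h => hx ?_⟩
    simpa using DFunLike.congr_fun h x
  have hne : Sp.Nonempty := by
    obtain ⟨μ, hμ⟩ := spectrum.nonempty H
    obtain ⟨s, _, rfl⟩ := hσ hμ
    exact ⟨s, hμ⟩
  have hclosed : IsClosed Sp := (spectrum.isClosed _).preimage Complex.continuous_ofReal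
  have hmem : m ∈ Sp := hclosed.csInf_mem hne hbdd
  have hmpos : 0 < m := (hsub hmem).1
  set U : (M →L[ℂ] M)ˣ := ⟨H, Hinv, hHinv.1, hHinv.2⟩ with hU
  have hspecinv : (spectrum ℂ H)⁻¹ = spectrum ℂ Hinv := spectrum.map_inv U
  have hHinvsa : IsSelfAdjoint Hinv := by
    have h : Hinv = 1 + S * S := by rw [hS2]; abel
    rw [h]
    exact (IsSelfAdjoint.one _).add (by rw [IsSelfAdjoint, star_mul, hS.isSelfAdjoint.star_eq])
  have hbound : ∀ k ∈ spectrum ℂ Hinv, ‖k‖₊ ≤ (m⁻¹).toNNReal := by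
    intro k hk
    rw [← hspecinv, Set.mem_inv] at hk
    obtain ⟨s, hs, hsk⟩ := hσ hk
    have hsSp : s ∈ Sp := by
      show ((s:ℝ):ℂ) ∈ spectrum ℂ H
      rw [show ((s:ℝ):ℂ) = k⁻¹ from hsk]
      exact hk
    have hms : m ≤ s := csInf_le hbdd hsSp
    have hkval : k = ((s : ℂ))⁻¹ := by rw [show ((s:ℝ):ℂ) = k⁻¹ from hsk, inv_inv]
    have hnorm : ‖k‖ = s⁻¹ := by
      rw [hkval, norm_inv, Complex.norm_real, Real.norm_eq_abs, abs_of_pos hs.1]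
    have hkm : ‖k‖ ≤ m⁻¹ := by
      rw [hnorm]
      exact inv_anti₀ hmpos hms
    rw [← norm_toNNReal]
    exact (Real.toNNReal_le_toNNReal_iff (by positivity)).mpr hkm
  have hHinvnorm : ‖Hinv‖ = m⁻¹ := by
    have hrad : ‖Hinv‖₊ ≤ (m⁻¹).toNNReal := by
      have h1 := hHinvsa.spectralRadius_eq_nnnorm
      have h2 : spectralRadius ℂ Hinv ≤ ((m⁻¹).toNNReal : ENNReal) := by
        rw [spectralRadius]
        exact iSup₂_le fun k hk => by exact_mod_cast hbound k hk
      rw [h1] at h2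
      exact_mod_cast h2
    have hupper : ‖Hinv‖ ≤ m⁻¹ := by
      have h3 : (‖Hinv‖₊ : ℝ) ≤ ((m⁻¹).toNNReal : ℝ) := NNReal.coe_le_coe.mpr hrad
      rwa [coe_nnnorm, Real.coe_toNNReal _ (inv_nonneg.mpr hmpos.le)] at h3
    have hlow : ((m : ℂ))⁻¹ ∈ spectrum ℂ Hinv := by
      rw [← hspecinv, Set.mem_inv, inv_inv]
      exact hmem
    have hlower : m⁻¹ ≤ ‖Hinv‖ := by
      have h4 := spectrum.norm_le_norm_of_mem hlow
      rwa [norm_inv, Complex.norm_real, Real.norm_eq_abs, abs_of_pos hmpos] at h4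
    linarith
  -- operator computations
  have hSsym : ∀ x y : M, inner ℂ (S x) y = inner ℂ x (S y) := fun x y => hS.1 x y
  have hTfst : ∀ z : WithLp 2 (M × M), (T z).fst = z.fst - S z.snd := fun z => by rw [hT]; rfl
  have hTsnd : ∀ z : WithLp 2 (M × M), (T z).snd = 0 := fun z => by rw [hT]; rfl
  have hHinv_eq : Hinv = 1 + S * S := by rw [hS2]; abel
  have hplus : ∀ u : M, u + S (S u) = Hinv u := by
    intro u
    rw [hHinv_eq]
    simp [ContinuousLinearMap.add_apply, ContinuousLinearMap.mul_apply]
  have hadj : ∀ z : WithLp 2 (M × M), adjoint T z =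
      (WithLp.equiv 2 (M × M)).symm (z.fst, -S z.fst) := by
    have key : ((WithLp.prodContinuousLinearEquiv 2 ℂ M M).symm.toContinuousLinearMap.comp
          ((((ContinuousLinearMap.id ℂ M).prod (-S)).comp (ContinuousLinearMap.fst ℂ M M)).comp
            (WithLp.prodContinuousLinearEquiv 2 ℂ M M).toContinuousLinearMap)) = adjoint T := by
      rw [eq_adjoint_iff]
      intro x y
      simp only [WithLp.prod_inner_apply, coe_comp', Function.comp_apply,
        ContinuousLinearEquiv.coe_coe, prod_apply, coe_fst', coe_id', id_eq, neg_apply,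
        hTfst, hTsnd, inner_sub_right, inner_zero_right, inner_neg_left,
        WithLp.prodContinuousLinearEquiv_apply, WithLp.prodContinuousLinearEquiv_symm_apply,
        WithLp.equiv_apply, WithLp.ofLp_fst, WithLp.ofLp_snd, WithLp.equiv_symm_apply, WithLp.toLp_fst, WithLp.toLp_snd, hSsym]
      ring
    intro z
    rw [← key]
    simp only [coe_comp', Function.comp_apply, ContinuousLinearEquiv.coe_coe, prod_apply,
      coe_fst', coe_id', id_eq, neg_apply, WithLp.prodContinuousLinearEquiv_apply,
      WithLp.prodContinuousLinearEquiv_symm_apply, WithLp.equiv_apply, WithLp.ofLp_fst, WithLp.equiv_symm_apply]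
  have hkey : ∀ u : M, inner ℂ (Hinv u) u = ((‖u‖^2 + ‖S u‖^2 : ℝ) : ℂ) := by
    intro u
    rw [← hplus u, inner_add_left, hSsym (S u) u]
    rw [inner_self_eq_norm_sq_to_K, inner_self_eq_norm_sq_to_K]
    push_cast
    rfl
  have hfst_le : ∀ z : WithLp 2 (M × M), ‖z.fst‖ ≤ ‖z‖ := fun z => by
    have h := WithLp.prod_norm_sq_eq_of_L2 z
    nlinarith [norm_nonneg z, norm_nonneg z.fst, sq_nonneg ‖z.snd‖]
  have hadjsq : ∀ z : WithLp 2 (M × M), ‖adjoint T z‖^2 = ‖z.fst‖^2 + ‖S z.fst‖^2 := by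
    intro z
    rw [hadj z, WithLp.prod_norm_sq_eq_of_L2]
    simp [WithLp.equiv_symm_apply, WithLp.toLp_fst, WithLp.toLp_snd]
  have hTadj : ‖adjoint T‖ = ‖T‖ := by
    exact LinearIsometryEquiv.norm_map adjoint T
  have hub : ‖T‖ ≤ Real.sqrt ‖Hinv‖ := by
    rw [← hTadj]
    refine opNorm_le_bound _ (Real.sqrt_nonneg _) fun z => ?_
    have h2 : ‖z.fst‖^2 + ‖S z.fst‖^2 ≤ ‖Hinv‖ * ‖z‖^2 := by
      have h4 : ‖inner ℂ (Hinv z.fst) z.fst‖ ≤ ‖Hinv z.fst‖ * ‖z.fst‖ :=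
        norm_inner_le_norm _ _
      rw [hkey z.fst, Complex.norm_real, Real.norm_eq_abs,
        abs_of_nonneg (by positivity)] at h4
      have h5 : ‖z.fst‖ ≤ ‖z‖ := hfst_le z
      have h6 : ‖Hinv z.fst‖ ≤ ‖Hinv‖ * ‖z.fst‖ := le_opNorm _ _
      calc ‖z.fst‖^2 + ‖S z.fst‖^2 ≤ ‖Hinv z.fst‖ * ‖z.fst‖ := h4
        _ ≤ (‖Hinv‖ * ‖z.fst‖) * ‖z.fst‖ := mul_le_mul_of_nonneg_right h6 (norm_nonneg _)
        _ = ‖Hinv‖ * ‖z.fst‖^2 := by ring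
        _ ≤ ‖Hinv‖ * ‖z‖^2 := by
            have h7 := mul_self_le_mul_self (norm_nonneg z.fst) h5
            nlinarith [opNorm_nonneg Hinv]
    refine le_of_sq_le_sq' _ _ (norm_nonneg _) (by positivity) ?_
    rw [mul_pow, Real.sq_sqrt (opNorm_nonneg Hinv), hadjsq z]
    exact h2
  have hTTadj : ∀ v : M, T (adjoint T ((WithLp.equiv 2 (M × M)).symm (v, 0))) =
      (WithLp.equiv 2 (M × M)).symm (Hinv v, 0) := by
    intro v
    rw [hadj, hT]
    simp only [WithLp.equiv_symm_apply, WithLp.toLp_fst, WithLp.toLp_snd, WithLp.equiv_apply, WithLp.ofLp_fst, WithLp.ofLp_snd,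
      map_neg, sub_neg_eq_add, hplus]
  have hHinv_le : ‖Hinv‖ ≤ ‖T‖^2 := by
    refine opNorm_le_bound _ (sq_nonneg _) fun v => ?_
    have h1 : ‖Hinv v‖ = ‖T (adjoint T ((WithLp.equiv 2 (M × M)).symm (v, 0)))‖ := by
      rw [hTTadj v, WithLp.equiv_symm_apply, WithLp.norm_toLp_fst]
    rw [h1]
    calc ‖T (adjoint T ((WithLp.equiv 2 (M × M)).symm (v, 0)))‖
        ≤ ‖T‖ * ‖adjoint T ((WithLp.equiv 2 (M × M)).symm (v, 0))‖ := le_opNorm _ _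
      _ ≤ ‖T‖ * (‖adjoint T‖ * ‖(WithLp.equiv 2 (M × M)).symm (v, 0)‖) :=
          mul_le_mul_of_nonneg_left (le_opNorm _ _) (opNorm_nonneg _)
      _ = ‖T‖^2 * ‖v‖ := by
          rw [hTadj, WithLp.equiv_symm_apply, WithLp.norm_toLp_fst]
          ring
  have hTm : ‖T‖^2 = m⁻¹ := by
    have h1 : ‖T‖^2 ≤ ‖Hinv‖ := by
      nlinarith [Real.sq_sqrt (opNorm_nonneg Hinv), opNorm_nonneg T, Real.sqrt_nonneg ‖Hinv‖]
    rw [← hHinvnorm]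
    linarith
  have hTpos : 0 < ‖T‖ := by
    nlinarith [inv_pos.mpr hmpos, opNorm_nonneg T]
  have hm0 : ((m : ℝ) : ℂ) ≠ 0 := by
    simpa using hmpos.ne'
  constructor
  · -- norm attained → eigenvector
    rintro ⟨x, hx1, hxT⟩
    set v : M := (T x).fst with hv
    have hTx : T x = (WithLp.equiv 2 (M × M)).symm (v, 0) := by
      have : T x = (WithLp.equiv 2 (M × M)).symm ((T x).fst, (T x).snd) := rfl
      rw [this, hTsnd]
    have hvnorm : ‖v‖ = ‖T‖ := by
      rw [← hxT, hTx, WithLp.equiv_symm_apply, WithLp.norm_toLp_fst]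
    have hvne : v ≠ 0 := by
      intro h
      rw [h, norm_zero] at hvnorm
      exact hTpos.ne hvnorm
    set a : WithLp 2 (M × M) := adjoint T (T x) with ha
    have h_inner : inner ℂ a x = ((‖T‖^2 : ℝ) : ℂ) := by
      rw [ha, adjoint_inner_left, inner_self_eq_norm_sq_to_K, hxT]
      push_cast
      rfl
    have h_norm_a_le : ‖a‖ ≤ ‖T‖^2 := by
      calc ‖a‖ ≤ ‖adjoint T‖ * ‖T x‖ := le_opNorm _ _
        _ = ‖T‖^2 := by rw [hTadj, hxT] at *; rw [hxT]; nlinarith [hTadj]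
    have h_norm_a_ge : ‖T‖^2 ≤ ‖a‖ := by
      have h8 : ‖inner ℂ a x‖ ≤ ‖a‖ * ‖x‖ := norm_inner_le_norm _ _
      rw [h_inner, hx1, mul_one, Complex.norm_real, Real.norm_eq_abs,
        abs_of_nonneg (sq_nonneg _)] at h8
      exact h8
    have h_a_norm : ‖a‖ = ‖T‖^2 := le_antisymm h_norm_a_le h_norm_a_ge
    have hcond : inner ℂ a x = ((‖a‖ : ℝ) : ℂ) * ((‖x‖ : ℝ) : ℂ) := by
      rw [h_inner, h_a_norm, hx1]
      push_cast
      ring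
    have hax : ((‖x‖ : ℝ) : ℂ) • a = ((‖a‖ : ℝ) : ℂ) • x :=
      inner_eq_norm_mul_iff.mp hcond
    have ha2 : a = ((‖T‖^2 : ℝ) : ℂ) • x := by
      rw [hx1, h_a_norm, Complex.ofReal_one, one_smul] at hax
      exact hax
    have hTa2 : (WithLp.equiv 2 (M × M)).symm (Hinv v, 0) =
        ((‖T‖^2 : ℝ) : ℂ) • (WithLp.equiv 2 (M × M)).symm (v, 0) := by
      have h10 := hTTadj v
      rw [← hTx, ← ha] at h10
      rw [← h10, ha2, map_smul, hTx]
    have hcomp : Hinv v = ((‖T‖^2 : ℝ) : ℂ) • v := by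
      have h11 := congrArg (fun z : WithLp 2 (M × M) => z.fst) hTa2
      simpa [WithLp.equiv_symm_apply, WithLp.toLp_fst, WithLp.smul_fst] using h11
    have hc : ((‖T‖^2 : ℝ) : ℂ) = ((m : ℂ))⁻¹ := by
      rw [hTm]
      push_cast
      ring
    have hHveq : H v = ((m : ℝ) : ℂ) • v := by
      have h9 : H (Hinv v) = v := by
        have h12 : (H * Hinv) v = v := by rw [hHinv.1]; rfl
        simpa [ContinuousLinearMap.mul_apply] using h12
      rw [hcomp, map_smul, hc] at h9
      rwa [inv_smul_eq_iff₀ hm0] at h9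
    exact ⟨v, hvne, hHveq⟩
  · -- eigenvector → norm attained
    rintro ⟨v, hv, hHv⟩
    have hvpos : 0 < ‖v‖ := norm_pos_iff.mpr hv
    have hMinvv : Hinv v = ((m : ℂ))⁻¹ • v := by
      have h1 : Hinv (H v) = v := by
        have h2 : (Hinv * H) v = v := by rw [hHinv.2]; rfl
        simpa [ContinuousLinearMap.mul_apply] using h2
      rw [hHv, map_smul] at h1
      calc Hinv v = ((m : ℂ))⁻¹ • (((m : ℝ) : ℂ) • Hinv v) := (inv_smul_smul₀ hm0 _).symm
        _ = ((m : ℂ))⁻¹ • v := by rw [h1]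
    set y : WithLp 2 (M × M) := (WithLp.equiv 2 (M × M)).symm (v, -S v) with hy
    have hTy : T y = (WithLp.equiv 2 (M × M)).symm (((m : ℂ))⁻¹ • v, 0) := by
      rw [hT, ← hMinvv]
      simp only [hy, WithLp.equiv_symm_apply, WithLp.toLp_fst, WithLp.toLp_snd, WithLp.equiv_apply, WithLp.ofLp_fst,
        WithLp.ofLp_snd, map_neg, sub_neg_eq_add, hplus]
    have hmCnorm : ‖((m : ℂ))⁻¹‖ = m⁻¹ := by
      rw [norm_inv, Complex.norm_real, Real.norm_eq_abs, abs_of_pos hmpos]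
    have hTynorm : ‖T y‖ = m⁻¹ * ‖v‖ := by
      rw [hTy, WithLp.equiv_symm_apply, WithLp.norm_toLp_fst, norm_smul, hmCnorm]
    have hynormsq : ‖y‖^2 = m⁻¹ * ‖v‖^2 := by
      have h2 : ‖y‖^2 = ‖v‖^2 + ‖S v‖^2 := by
        rw [hy, WithLp.prod_norm_sq_eq_of_L2]
        simp [WithLp.equiv_symm_apply, WithLp.toLp_fst, WithLp.toLp_snd]
      have h3 := hkey v
      rw [hMinvv, inner_smul_left, inner_self_eq_norm_sq_to_K] at h3
      have h4 : (starRingEnd ℂ) (((m : ℂ))⁻¹) = ((m⁻¹ : ℝ) : ℂ) := by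
        rw [map_inv₀, Complex.conj_ofReal, Complex.ofReal_inv]
      rw [h4] at h3
      have h6 : m⁻¹ * ‖v‖^2 = ‖v‖^2 + ‖S v‖^2 := by
        have hbr : (RCLike.ofReal (K := ℂ)) = Complex.ofReal := rfl
        rw [hbr] at h3
        exact_mod_cast h3
      linarith [h2]
    have hy0 : 0 < ‖y‖ := by
      rcases (norm_nonneg y).lt_or_eq with h | h
      · exact h
      · exfalso
        rw [← h] at hynormsq
        nlinarith [mul_pos (inv_pos.mpr hmpos) (pow_pos hvpos 2)]
    refine ⟨((‖y‖⁻¹ : ℝ) : ℂ) • y, ?_, ?_⟩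
    · rw [norm_smul, Complex.norm_real, Real.norm_eq_abs, abs_of_pos (inv_pos.mpr hy0)]
      field_simp
    · have h7 : ‖T (((‖y‖⁻¹ : ℝ) : ℂ) • y)‖^2 = ‖T‖^2 := by
        rw [map_smul, norm_smul, hTynorm, Complex.norm_real, Real.norm_eq_abs,
          abs_of_pos (inv_pos.mpr hy0), hTm, mul_pow, inv_pow, hynormsq]
        field_simp
      exact eq_of_sq_eq_sq'' _ _ (norm_nonneg _) (opNorm_nonneg _) h7

/-- Let `H` be a bounded self-adjoint operator on a complex Hilbert space `M` with
`σ(H) ⊆ (0,1]`, let `S = √(H⁻¹ − I)` (the positive square root), and let `T` be the block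
operator `[[I, −S],[0,0]]` on `M ⊕ M` (with the ℓ² direct sum norm). Then `T` is
idempotent, and `T` attains its norm if and only if `min σ(H)` is an eigenvalue of `H`. -/
theorem block_skew_projection_normAttain_iff_min_spectrum_eigenvalue
    {M : Type*} [NormedAddCommGroup M] [InnerProductSpace ℂ M] [CompleteSpace M]
    (H : M →L[ℂ] M) (hH : IsSelfAdjoint H)
    (hσ : spectrum ℂ H ⊆ (fun r : ℝ => (r : ℂ)) '' Set.Ioc 0 1)
    (Hinv : M →L[ℂ] M) (hHinv : H * Hinv = 1 ∧ Hinv * H = 1)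
    (S : M →L[ℂ] M) (hS : S.IsPositive) (hS2 : S * S = Hinv - 1)
    (T : WithLp 2 (M × M) →L[ℂ] WithLp 2 (M × M))
    (hT : ∀ z : WithLp 2 (M × M),
      T z = (WithLp.equiv 2 (M × M)).symm
        ((WithLp.equiv 2 (M × M) z).1 - S ((WithLp.equiv 2 (M × M) z).2), 0)) :
    IsIdempotentElem T ∧
      ((∃ x : WithLp 2 (M × M), ‖x‖ = 1 ∧ ‖T x‖ = ‖T‖) ↔
        (∃ v : M, v ≠ 0 ∧
          H v = ((sInf {r : ℝ | (r : ℂ) ∈ spectrum ℂ H} : ℝ) : ℂ) • v)) := by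
  constructor
  · have hTfst : ∀ z : WithLp 2 (M × M), (T z).fst = z.fst - S z.snd := fun z => by rw [hT]; rfl
    have hTsnd : ∀ z : WithLp 2 (M × M), (T z).snd = 0 := fun z => by rw [hT]; rfl
    ext z
    rw [ContinuousLinearMap.mul_apply, hT (T z), hT z]
    simp only [WithLp.equiv_apply, WithLp.ofLp_fst, WithLp.ofLp_snd, hTfst, hTsnd, map_zero, sub_zero,
      WithLp.equiv_symm_apply, WithLp.toLp_fst, WithLp.toLp_snd]
  · rcases subsingleton_or_nontrivial M with hs | hn
    · constructor
      · rintro ⟨x, hx1, -⟩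
        exfalso
        haveI : Subsingleton (WithLp 2 (M × M)) := (WithLp.equiv 2 (M × M)).subsingleton
        rw [Subsingleton.elim x 0, norm_zero] at hx1
        exact zero_ne_one hx1
      · rintro ⟨v, hv, -⟩
        exact absurd (Subsingleton.elim v 0) hv
    · exact aux_iff H hH hσ Hinv hHinv S hS hS2 T hT
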